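/- Every finite class Q = {q₁,…,q_m} of probability distributions over ℕ is 3-agnostic PAC learnable in total variation distance with sample complexity m_Q(4ε, δ) ≤ (log(3m²) + log(1/δ)) / (2ε²). -/

import Mathlib

open MeasureTheory Filter

/-- Total variation distance between two distributions over `ℕ`. -/
noncomputable def tv (p q : PMF ℕ) : ℝ :=
  ⨆ A : Set ℕ, |(p.toMeasure A).toReal - (q.toMeasure A).toReal|

/-- The distribution of an i.i.d. sample of size `m` drawn from `q`. -/
noncomputable def iidSample {α : Type*} [MeasurableSpace α] (q : PMF α) (m : ℕ) :
    Measure (Fin m → α) :=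
  Measure.pi fun _ => q.toMeasure

/-- The mixture `(1 - η) δ₀ + η U_A` of the point mass at `0` and the uniform
distribution on the finite set `A` (junk values when `η ∉ [0,1]` or `A = ∅`). -/
noncomputable def mixPMF (η : ℝ) (A : Finset ℕ) : PMF ℕ :=
  (PMF.bernoulli (min (Real.toNNReal η) 1) (min_le_right _ _)).bind fun b =>
    if h : b = true ∧ A.Nonempty then PMF.uniformOfFinset A h.2 else PMF.pure 0

/-- Realizable PAC learnability of a class of distributions over `ℕ` in total
variation distance, witnessed by the learner `A` and sample complexity `mQ`. -/
def RealizablePAC (Q : Set (PMF ℕ)) (A : ∀ m : ℕ, (Fin m → ℕ) → PMF ℕ)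
    (mQ : ℝ → ℝ → ℕ) : Prop :=
  ∀ ε δ : ℝ, 0 < ε → ε < 1 → 0 < δ → δ < 1 → ∀ q ∈ Q, ∀ m ≥ mQ ε δ,
    (iidSample q m) {S | ε < tv (A m S) q} ≤ ENNReal.ofReal δ

/-- 3-agnostic PAC learnability of a class of distributions over `ℕ` in total
variation distance, witnessed by the learner `A` and sample complexity `mQ`. -/
def Agnostic3PAC (Q : Set (PMF ℕ)) (A : ∀ m : ℕ, (Fin m → ℕ) → PMF ℕ)
    (mQ : ℝ → ℝ → ℕ) : Prop :=
  ∀ ε δ : ℝ, 0 < ε → 0 < δ → δ < 1 → ∀ P : PMF ℕ, ∀ m ≥ mQ ε δ,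
    ENNReal.ofReal (1 - δ) ≤
      (iidSample P m) {S | tv (A m S) P ≤ 3 * (⨅ q : Q, tv q.1 P) + ε}

open ProbabilityTheory Real
open scoped ENNReal


noncomputable def dd (p q : PMF ℕ) (B : Set ℕ) : ℝ :=
  (p.toMeasure B).toReal - (q.toMeasure B).toReal

def Sch (p q : PMF ℕ) : Set ℕ := {x | q x < p x}

lemma summable_pmf (p : PMF ℕ) : Summable (fun x => (p x).toReal) :=
  ENNReal.summable_toReal (by simp [p.tsum_coe])

lemma meas_toReal (p : PMF ℕ) (B : Set ℕ) :
    (p.toMeasure B).toReal = ∑' x, B.indicator (fun x => (p x).toReal) x := by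
  rw [p.toMeasure_apply (s := B) (by measurability), ENNReal.tsum_toReal_eq]
  · congr 1; ext x
    by_cases h : x ∈ B <;> simp [h]
  · intro a
    by_cases h : a ∈ B <;> simp [h, (p.apply_lt_top a).ne]

lemma dd_eq (p q : PMF ℕ) (B : Set ℕ) :
    dd p q B = ∑' x, B.indicator (fun x => (p x).toReal - (q x).toReal) x := by
  rw [dd, meas_toReal, meas_toReal, ← Summable.tsum_sub ((summable_pmf p).indicator B)
    ((summable_pmf q).indicator B)]
  congr 1; ext x
  by_cases h : x ∈ B <;> simp [h]

lemma dd_le_dd_Sch (p q : PMF ℕ) (B : Set ℕ) : dd p q B ≤ dd p q (Sch p q) := by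
  rw [dd_eq, dd_eq]
  refine Summable.tsum_le_tsum (fun x => ?_) ((summable_pmf p).sub (summable_pmf q) |>.indicator B)
    ((summable_pmf p).sub (summable_pmf q) |>.indicator _)
  by_cases hx : x ∈ Sch p q
  · have hf : 0 ≤ (p x).toReal - (q x).toReal := by
      have := ENNReal.toReal_mono (p.apply_lt_top x).ne hx.le
      linarith
    by_cases h : x ∈ B <;> simp [h, hx, hf]
  · have hle : p x ≤ q x := not_lt.1 hx
    have hf : (p x).toReal - (q x).toReal ≤ 0 := by
      have := ENNReal.toReal_mono (q.apply_lt_top x).ne hle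
      linarith
    by_cases h : x ∈ B <;> simp [h, hx, hf]

lemma dd_compl (p q : PMF ℕ) (B : Set ℕ) : dd p q Bᶜ = - dd p q B := by
  have h1 : (p.toMeasure Bᶜ).toReal = 1 - (p.toMeasure B).toReal := by
    rw [measure_compl (by measurability) (measure_ne_top _ _), measure_univ,
      ENNReal.toReal_sub_of_le prob_le_one (by simp), ENNReal.toReal_one]
  have h2 : (q.toMeasure Bᶜ).toReal = 1 - (q.toMeasure B).toReal := by
    rw [measure_compl (by measurability) (measure_ne_top _ _), measure_univ,
      ENNReal.toReal_sub_of_le prob_le_one (by simp), ENNReal.toReal_one]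
  simp only [dd, h1, h2]; ring

lemma abs_dd_le_dd_Sch (p q : PMF ℕ) (B : Set ℕ) : |dd p q B| ≤ dd p q (Sch p q) := by
  rcases abs_cases (dd p q B) with ⟨h, _⟩ | ⟨h, _⟩
  · rw [h]; exact dd_le_dd_Sch p q B
  · rw [h, ← dd_compl]; exact dd_le_dd_Sch p q Bᶜ

lemma bdd_dd (p q : PMF ℕ) : BddAbove (Set.range fun B => |dd p q B|) := by
  refine ⟨1, fun x ⟨B, hB⟩ => ?_⟩
  rw [← hB]
  have h1 : (p.toMeasure B).toReal ≤ 1 := ENNReal.toReal_le_of_le_ofReal one_pos.le (by simpa using prob_le_one)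
  have h2 : (q.toMeasure B).toReal ≤ 1 := ENNReal.toReal_le_of_le_ofReal one_pos.le (by simpa using prob_le_one)
  have h3 : 0 ≤ (p.toMeasure B).toReal := ENNReal.toReal_nonneg
  have h4 : 0 ≤ (q.toMeasure B).toReal := ENNReal.toReal_nonneg
  rw [abs_le]; constructor <;> [skip; skip] <;> simp [dd] <;> linarith

lemma tv_eq_dd (p q : PMF ℕ) : tv p q = dd p q (Sch p q) := by
  refine le_antisymm (ciSup_le fun B => abs_dd_le_dd_Sch p q B) ?_
  exact le_trans (le_abs_self _) (le_ciSup (bdd_dd p q) (Sch p q))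

lemma abs_dd_le_tv (p q : PMF ℕ) (B : Set ℕ) : |dd p q B| ≤ tv p q :=
  le_ciSup (bdd_dd p q) B

lemma tv_nonneg (p q : PMF ℕ) : 0 ≤ tv p q :=
  le_trans (abs_nonneg _) (abs_dd_le_tv p q ∅)

lemma tv_le_one (p q : PMF ℕ) : tv p q ≤ 1 := by
  refine ciSup_le fun B => ?_
  have h1 : (p.toMeasure B).toReal ≤ 1 := ENNReal.toReal_le_of_le_ofReal one_pos.le (by simpa using prob_le_one)
  have h2 : (q.toMeasure B).toReal ≤ 1 := ENNReal.toReal_le_of_le_ofReal one_pos.le (by simpa using prob_le_one)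
  have h3 : 0 ≤ (p.toMeasure B).toReal := ENNReal.toReal_nonneg
  have h4 : 0 ≤ (q.toMeasure B).toReal := ENNReal.toReal_nonneg
  rw [abs_le]; constructor <;> linarith


noncomputable def emp (n : ℕ) (S : Fin n → ℕ) (B : Set ℕ) : ℝ :=
  (∑ i, B.indicator (fun _ => (1:ℝ)) (S i)) / n

noncomputable def pairDev (q : PMF ℕ) (n : ℕ) (S : Fin n → ℕ)
    (rr : PMF ℕ × PMF ℕ) : ℝ :=
  |(q.toMeasure (Sch rr.1 rr.2)).toReal - emp n S (Sch rr.1 rr.2)|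

noncomputable def errOf (Q : Finset (PMF ℕ)) (hQ : Q.Nonempty) (n : ℕ)
    (S : Fin n → ℕ) (q : PMF ℕ) : ℝ :=
  (Q ×ˢ Q).sup' (hQ.product hQ) (pairDev q n S)

lemma pairDev_def (q : PMF ℕ) (n : ℕ) (S : Fin n → ℕ) (r r' : PMF ℕ) :
    pairDev q n S (r, r') = |(q.toMeasure (Sch r r')).toReal - emp n S (Sch r r')| := rfl

lemma le_errOf (Q : Finset (PMF ℕ)) (hQ : Q.Nonempty) (n : ℕ) (S : Fin n → ℕ)
    (q : PMF ℕ) {r r' : PMF ℕ} (hr : r ∈ Q) (hr' : r' ∈ Q) :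
    |(q.toMeasure (Sch r r')).toReal - emp n S (Sch r r')| ≤ errOf Q hQ n S q := by
  rw [← pairDev_def]
  exact Finset.le_sup' (pairDev q n S) (Finset.mem_product.2 ⟨hr, hr'⟩)

noncomputable def qhat (Q : Finset (PMF ℕ)) (hQ : Q.Nonempty) (n : ℕ)
    (S : Fin n → ℕ) : PMF ℕ :=
  (Q.exists_min_image (errOf Q hQ n S) hQ).choose

lemma qhat_mem (Q : Finset (PMF ℕ)) (hQ : Q.Nonempty) (n : ℕ) (S : Fin n → ℕ) :
    qhat Q hQ n S ∈ Q :=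
  (Q.exists_min_image (errOf Q hQ n S) hQ).choose_spec.1

lemma qhat_min (Q : Finset (PMF ℕ)) (hQ : Q.Nonempty) (n : ℕ) (S : Fin n → ℕ) :
    ∀ q ∈ Q, errOf Q hQ n S (qhat Q hQ n S) ≤ errOf Q hQ n S q :=
  (Q.exists_min_image (errOf Q hQ n S) hQ).choose_spec.2

lemma tv_triangle (p q r : PMF ℕ) : tv p r ≤ tv p q + tv q r := by
  have h1 := abs_dd_le_tv p q (Sch p r)
  have h2 := abs_dd_le_tv q r (Sch p r)
  have h3 : dd p r (Sch p r) = dd p q (Sch p r) + dd q r (Sch p r) := by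
    simp only [dd]; ring
  have h4 := le_abs_self (dd p q (Sch p r))
  have h5 := le_abs_self (dd q r (Sch p r))
  rw [tv_eq_dd]
  linarith

lemma det_bound (Q : Finset (PMF ℕ)) (hQ : Q.Nonempty) (n : ℕ) (S : Fin n → ℕ)
    (P qs : PMF ℕ) (hqs : qs ∈ Q) (ε : ℝ)
    (hgood : ∀ r ∈ Q, ∀ r' ∈ Q,
      |emp n S (Sch r r') - (P.toMeasure (Sch r r')).toReal| ≤ ε/2) :
    tv (qhat Q hQ n S) P ≤ 3 * tv qs P + ε := by
  set qh := qhat Q hQ n S with hqh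
  set B := Sch qh qs with hB
  have hpair : (qh, qs) ∈ Q ×ˢ Q := Finset.mem_product.2 ⟨qhat_mem Q hQ n S, hqs⟩
  have e1 : |(qh.toMeasure B).toReal - emp n S B| ≤ errOf Q hQ n S qh :=
    le_errOf Q hQ n S qh (qhat_mem Q hQ n S) hqs
  have e2 : errOf Q hQ n S qh ≤ errOf Q hQ n S qs := qhat_min Q hQ n S qs hqs
  have e3 : errOf Q hQ n S qs ≤ tv qs P + ε/2 := by
    rw [errOf]
    refine Finset.sup'_le _ _ fun rr hrr => ?_
    obtain ⟨r, r'⟩ := rr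
    rw [Finset.mem_product] at hrr
    rw [pairDev_def]
    have h1 : |dd qs P (Sch r r')| ≤ tv qs P := abs_dd_le_tv qs P _
    have h2 := hgood r hrr.1 r' hrr.2
    rw [dd] at h1
    rw [abs_sub_comm] at h2
    calc |(qs.toMeasure (Sch r r')).toReal - emp n S (Sch r r')|
        ≤ |(qs.toMeasure (Sch r r')).toReal - (P.toMeasure (Sch r r')).toReal|
          + |(P.toMeasure (Sch r r')).toReal - emp n S (Sch r r')| :=
          abs_sub_le _ _ _
      _ ≤ tv qs P + ε/2 := add_le_add h1 h2
  have e4 : |emp n S B - (P.toMeasure B).toReal| ≤ ε/2 := hgood qh (qhat_mem Q hQ n S) qs hqs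
  have e5 : |dd qs P B| ≤ tv qs P := abs_dd_le_tv qs P B
  have e6 : tv qh P ≤ tv qh qs + tv qs P := tv_triangle qh qs P
  have e7 : tv qh qs = dd qh qs B := tv_eq_dd qh qs
  have e8 : dd qh qs B = ((qh.toMeasure B).toReal - emp n S B)
      + (emp n S B - (P.toMeasure B).toReal)
      + ((P.toMeasure B).toReal - (qs.toMeasure B).toReal) := by simp only [dd]; ring
  rw [dd] at e5
  rw [abs_le] at e1 e4 e5
  obtain ⟨e1a, e1b⟩ := e1
  obtain ⟨e4a, e4b⟩ := e4
  obtain ⟨e5a, e5b⟩ := e5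
  linarith
lemma exp_le_cosh_add (s y : ℝ) (hy : |y| ≤ 1) :
    Real.exp (s * y) ≤ Real.cosh s + y * Real.sinh s := by
  rw [abs_le] at hy
  have h := convexOn_exp.2 (Set.mem_univ s) (Set.mem_univ (-s))
    (show (0:ℝ) ≤ (1+y)/2 by linarith) (show (0:ℝ) ≤ (1-y)/2 by linarith)
    (show (1+y)/2 + (1-y)/2 = 1 by ring)
  simp only [smul_eq_mul] at h
  have hs : (1+y)/2 * s + (1-y)/2 * (-s) = s * y := by ring
  rw [hs] at h
  calc Real.exp (s*y) ≤ (1+y)/2 * Real.exp s + (1-y)/2 * Real.exp (-s) := h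
    _ = Real.cosh s + y * Real.sinh s := by rw [Real.cosh_eq, Real.sinh_eq]; ring

lemma chernoff (μ : Measure ℕ) [IsProbabilityMeasure μ] (n : ℕ) (g : ℕ → ℝ)
    (hg1 : ∀ x, |g x| ≤ 1) (hg0 : ∫ x, g x ∂μ = 0) (s : ℝ) (hs : 0 < s) :
    Measure.pi (fun _ : Fin n => μ) {S | (n:ℝ) * s ≤ ∑ i, g (S i)} ≤
      ENNReal.ofReal (Real.exp (-(n * s^2)/2)) := by
  letI : MeasureSpace ℕ := ⟨μ⟩
  have hμ : μ = (volume : Measure ℕ) := rfl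
  set ν : Measure (Fin n → ℕ) := Measure.pi (fun _ : Fin n => μ) with hν
  haveI : IsProbabilityMeasure ν := by rw [hν]; infer_instance
  have hgm : Measurable g := measurable_from_top
  have hgint : Integrable g μ := by
    refine (integrable_const (1:ℝ)).mono' hgm.aestronglyMeasurable ?_
    exact Filter.Eventually.of_forall fun x => by simpa using hg1 x
  -- single variable mgf bound
  have hone : ∫ x, Real.exp (s * g x) ∂μ ≤ Real.exp (s^2/2) := by
    have hint : Integrable (fun x => Real.exp (s * g x)) μ := by
      refine (integrable_const (Real.exp |s|)).mono'
        ((Real.measurable_exp.comp (hgm.const_mul s)).aestronglyMeasurable) ?_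
      refine Filter.Eventually.of_forall fun x => ?_
      rw [Real.norm_eq_abs, Real.abs_exp, Real.exp_le_exp]
      calc s * g x ≤ |s * g x| := le_abs_self _
        _ = |s| * |g x| := abs_mul s (g x)
        _ ≤ |s| * 1 := by gcongr; exact hg1 x
        _ = |s| := mul_one _
    calc ∫ x, Real.exp (s * g x) ∂μ
        ≤ ∫ x, (Real.cosh s + g x * Real.sinh s) ∂μ := by
          refine integral_mono hint ?_ (fun x => exp_le_cosh_add s (g x) (hg1 x))
          exact (integrable_const _).add (hgint.mul_const _)
      _ = Real.cosh s + (∫ x, g x ∂μ) * Real.sinh s := by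
          rw [integral_add (integrable_const _) (hgint.mul_const _), integral_const,
            integral_mul_const]
          simp
      _ = Real.cosh s := by rw [hg0]; ring
      _ ≤ Real.exp (s^2/2) := by simpa using Real.cosh_le_exp_half_sq s
  -- X and its exp-integral
  set X : (Fin n → ℕ) → ℝ := fun S => ∑ i, g (S i) with hX
  have hXm : Measurable X := by
    exact Finset.measurable_sum _ fun i _ => hgm.comp (measurable_pi_apply i)
  have hXint : Integrable (fun S => Real.exp (s * X S)) ν := by
    refine (integrable_const (Real.exp (|s| * n))).mono'
      ((Real.measurable_exp.comp (hXm.const_mul s)).aestronglyMeasurable) ?_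
    refine Filter.Eventually.of_forall fun S => ?_
    rw [Real.norm_eq_abs, Real.abs_exp, Real.exp_le_exp]
    calc s * X S ≤ |s * X S| := le_abs_self _
      _ = |s| * |X S| := abs_mul _ _
      _ ≤ |s| * n := by
          gcongr
          calc |X S| ≤ ∑ i, |g (S i)| := Finset.abs_sum_le_sum_abs _ _
            _ ≤ ∑ _i : Fin n, (1:ℝ) := Finset.sum_le_sum fun i _ => hg1 (S i)
            _ = n := by simp
  have hprod : ∫ S, Real.exp (s * X S) ∂ν = (∫ x, Real.exp (s * g x) ∂μ) ^ n := by
    have : ∀ S : Fin n → ℕ, Real.exp (s * X S) = ∏ i, Real.exp (s * g (S i)) := by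
      intro S
      rw [hX, ← Real.exp_sum, Finset.mul_sum]
    simp_rw [this]
    have := MeasureTheory.integral_fintype_prod_eq_pow (𝕜 := ℝ) (ι := Fin n) (μ := (volume : Measure ℕ))
      (fun x : ℕ => Real.exp (s * g x))
    rw [hν, hμ]
    rw [← MeasureTheory.volume_pi]
    simpa [MeasureTheory.volume_pi] using this
  -- Chernoff
  have hch := ProbabilityTheory.measure_ge_le_exp_mul_mgf (μ := ν) (X := X)
    ((n:ℝ) * s) hs.le hXint
  have hmgf : mgf X ν s ≤ Real.exp ((n : ℝ) * s^2/2) := by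
    rw [ProbabilityTheory.mgf]
    calc ∫ S, Real.exp (s * X S) ∂ν = (∫ x, Real.exp (s * g x) ∂μ)^n := hprod
      _ ≤ (Real.exp (s^2/2))^n := by
          refine pow_le_pow_left₀ ?_ hone n
          positivity
      _ = Real.exp ((n:ℝ) * s^2/2) := by
          rw [← Real.exp_nat_mul]; ring_nf
  have hfin : ν {S | (n:ℝ) * s ≤ X S} ≠ ⊤ := measure_ne_top _ _
  rw [ENNReal.le_ofReal_iff_toReal_le hfin (Real.exp_pos _).le]
  calc (ν {S | (n:ℝ)*s ≤ X S}).toReal ≤ Real.exp (-s * ((n:ℝ)*s)) * mgf X ν s := hch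
    _ ≤ Real.exp (-s * ((n:ℝ)*s)) * Real.exp ((n:ℝ)*s^2/2) := by
        have := Real.exp_pos (-s * ((n:ℝ)*s))
        nlinarith [hmgf]
    _ = Real.exp (-((n:ℝ) * s^2)/2) := by rw [← Real.exp_add]; ring_nf

lemma pair_bad (P : PMF ℕ) (n : ℕ) (hn : 0 < n) (B : Set ℕ) (s : ℝ) (hs : 0 < s) :
    iidSample P n {S | s < |emp n S B - (P.toMeasure B).toReal|} ≤
      ENNReal.ofReal (2 * Real.exp (-(n * s^2)/2)) := by
  set p := (P.toMeasure B).toReal with hp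
  have hp0 : 0 ≤ p := ENNReal.toReal_nonneg
  have hp1 : p ≤ 1 := ENNReal.toReal_le_of_le_ofReal one_pos.le (by simpa using prob_le_one)
  set g1 : ℕ → ℝ := fun x => B.indicator (fun _ => (1:ℝ)) x - p with hg1def
  set g2 : ℕ → ℝ := fun x => p - B.indicator (fun _ => (1:ℝ)) x with hg2def
  have hBm : MeasurableSet B := by measurability
  have hind01 : ∀ x, B.indicator (fun _ => (1:ℝ)) x = 0 ∨ B.indicator (fun _ => (1:ℝ)) x = 1 := by
    intro x
    by_cases h : x ∈ B
    · right; rw [Set.indicator_of_mem h]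
    · left; rw [Set.indicator_of_notMem h]
  have hb1 : ∀ x, |g1 x| ≤ 1 := by
    intro x
    have : g1 x = B.indicator (fun _ => (1:ℝ)) x - p := rfl
    rw [this, abs_le]
    rcases hind01 x with h | h <;> rw [h] <;> constructor <;> linarith
  have hb2 : ∀ x, |g2 x| ≤ 1 := by
    intro x
    have : g2 x = -(g1 x) := by show p - _ = -(_ - p); ring
    rw [this, abs_neg]; exact hb1 x
  have hindint : Integrable (B.indicator (fun _ => (1:ℝ))) P.toMeasure := by
    refine (integrable_const (1:ℝ)).mono'
      (measurable_from_top (f := B.indicator (fun _ => (1:ℝ)))).aestronglyMeasurable ?_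
    refine Filter.Eventually.of_forall fun x => ?_
    rw [Real.norm_eq_abs]
    rcases hind01 x with h | h <;> rw [h] <;> norm_num
  have hindval : ∫ x, B.indicator (fun _ => (1:ℝ)) x ∂P.toMeasure = p := by
    rw [integral_indicator_const (1:ℝ) hBm, smul_eq_mul, mul_one]
    rfl
  have hint1 : ∫ x, g1 x ∂P.toMeasure = 0 := by
    rw [show (fun x => g1 x) = fun x => B.indicator (fun _ => (1:ℝ)) x - p from rfl]
    rw [integral_sub hindint (integrable_const p), hindval, integral_const]
    simp
  have hint2 : ∫ x, g2 x ∂P.toMeasure = 0 := by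
    rw [show (fun x => g2 x) = fun x => p - B.indicator (fun _ => (1:ℝ)) x from rfl]
    rw [integral_sub (integrable_const p) hindint, hindval, integral_const]
    simp
  have hnR : (0:ℝ) < n := by exact_mod_cast hn
  have hsub : {S : Fin n → ℕ | s < |emp n S B - p|} ⊆
      {S | (n:ℝ)*s ≤ ∑ i, g1 (S i)} ∪ {S | (n:ℝ)*s ≤ ∑ i, g2 (S i)} := by
    intro S hS
    simp only [Set.mem_setOf_eq] at hS
    have hsum1 : ∑ i, g1 (S i) = (∑ i, B.indicator (fun _ => (1:ℝ)) (S i)) - n * p := by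
      rw [Finset.sum_sub_distrib, Finset.sum_const, Finset.card_univ, Fintype.card_fin]
      simp [nsmul_eq_mul]
    have hsum2 : ∑ i, g2 (S i) = n * p - (∑ i, B.indicator (fun _ => (1:ℝ)) (S i)) := by
      rw [Finset.sum_sub_distrib, Finset.sum_const, Finset.card_univ, Fintype.card_fin]
      simp [nsmul_eq_mul]
    have hemp : emp n S B - p = ((∑ i, B.indicator (fun _ => (1:ℝ)) (S i)) - n * p) / n := by
      rw [emp]; field_simp
    rcases abs_cases (emp n S B - p) with ⟨hc, _⟩ | ⟨hc, _⟩
    · left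
      simp only [Set.mem_setOf_eq]
      rw [hsum1]
      rw [hc, hemp] at hS
      rw [lt_div_iff₀ hnR] at hS
      linarith
    · right
      simp only [Set.mem_setOf_eq]
      rw [hsum2]
      rw [hc, hemp] at hS
      have : s * n < -(((∑ i, B.indicator (fun _ => (1:ℝ)) (S i)) - n * p)) := by
        rw [← lt_div_iff₀ hnR] at *
        calc s < -(((∑ i, B.indicator (fun _ => (1:ℝ)) (S i)) - ↑n * p) / ↑n) := hS
          _ = -((∑ i, B.indicator (fun _ => (1:ℝ)) (S i)) - ↑n * p) / ↑n := by ring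
      linarith
  calc iidSample P n {S | s < |emp n S B - p|}
      ≤ iidSample P n ({S | (n:ℝ)*s ≤ ∑ i, g1 (S i)} ∪ {S | (n:ℝ)*s ≤ ∑ i, g2 (S i)}) :=
        measure_mono hsub
    _ ≤ iidSample P n {S | (n:ℝ)*s ≤ ∑ i, g1 (S i)}
        + iidSample P n {S | (n:ℝ)*s ≤ ∑ i, g2 (S i)} := measure_union_le _ _
    _ ≤ ENNReal.ofReal (Real.exp (-(n * s^2)/2)) + ENNReal.ofReal (Real.exp (-(n * s^2)/2)) := by
        have c1 := chernoff P.toMeasure n g1 hb1 hint1 s hs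
        have c2 := chernoff P.toMeasure n g2 hb2 hint2 s hs
        exact add_le_add c1 c2
    _ = ENNReal.ofReal (2 * Real.exp (-(n * s^2)/2)) := by
        rw [← ENNReal.ofReal_add (Real.exp_pos _).le (Real.exp_pos _).le]
        ring_nf

lemma exp_eighth : Real.exp ((1:ℝ)/8) ≤ 3/2 := by
  have h := Real.add_one_le_exp (-(1/8) : ℝ)
  have hpos := Real.exp_pos ((1:ℝ)/8)
  have hneg : Real.exp (-(1/8):ℝ) * Real.exp ((1:ℝ)/8) = 1 := by
    rw [← Real.exp_add]; norm_num
  nlinarith [Real.exp_pos (-(1/8):ℝ)]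

lemma numeric (m : ℕ) (hm : 1 ≤ m) {ε δ : ℝ} (hε0 : 0 < ε) (hε1 : ε < 1)
    (hδ0 : 0 < δ) (hδ1 : δ < 1) (n : ℕ)
    (hn : ⌊8 * (Real.log (3*(m:ℝ)^2) + Real.log (1/δ)) / ε^2⌋₊ ≤ n) :
    (m:ℝ)^2 * (2 * Real.exp (-(↑n * (ε/2)^2)/2)) ≤ δ := by
  set L := Real.log (3*(m:ℝ)^2) + Real.log (1/δ) with hL
  have hm1 : (1:ℝ) ≤ m := by exact_mod_cast hm
  have h3m : (1:ℝ) ≤ 3*(m:ℝ)^2 := by nlinarith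
  have h3mpos : (0:ℝ) < 3*(m:ℝ)^2 := by nlinarith
  have hlog1 : 0 ≤ Real.log (3*(m:ℝ)^2) := Real.log_nonneg h3m
  have hlog2 : 0 ≤ Real.log (1/δ) := Real.log_nonneg (by rw [le_div_iff₀ hδ0]; linarith)
  have hlog3 : (1:ℝ) < Real.log 3 := by
    have h9 := Real.exp_one_lt_d9
    have h3 : Real.exp 1 < 3 := by norm_num at h9 ⊢; linarith
    calc (1:ℝ) = Real.log (Real.exp 1) := (Real.log_exp 1).symm
      _ < Real.log 3 := Real.log_lt_log (Real.exp_pos 1) h3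
  have hL1 : 1 ≤ L := by
    have : Real.log 3 ≤ Real.log (3*(m:ℝ)^2) := Real.log_le_log (by norm_num) (by nlinarith)
    simp only [hL]; linarith
  have hL0 : 0 ≤ L := by linarith
  have hfl : 8*L/ε^2 - 1 < (n:ℝ) := by
    have h1 : 8*L/ε^2 - 1 < (⌊8*L/ε^2⌋₊ : ℝ) := Nat.sub_one_lt_floor _
    have h2 : ((⌊8*L/ε^2⌋₊ : ℕ) : ℝ) ≤ (n:ℝ) := by exact_mod_cast hn
    linarith
  have hε2 : (0:ℝ) < ε^2 := by positivity
  have hexp : Real.exp (-(↑n * (ε/2)^2)/2) ≤ Real.exp ((1:ℝ)/8) * (δ / (3*(m:ℝ)^2)) := by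
    have key : -(↑n * (ε/2)^2)/2 ≤ 1/8 - L := by
      have hmul : (8*L/ε^2 - 1) * (ε^2/8) ≤ (n:ℝ) * (ε^2/8) := by nlinarith
      have hexpand : (8*L/ε^2 - 1) * (ε^2/8) = L - ε^2/8 := by field_simp
      have hform : (n:ℝ) * (ε/2)^2/2 = (n:ℝ) * (ε^2/8) := by ring
      have hsq : ε^2 ≤ 1 := by nlinarith
      rw [hexpand] at hmul
      rw [neg_div]
      rw [hform]
      linarith
    calc Real.exp (-(↑n*(ε/2)^2)/2) ≤ Real.exp ((1:ℝ)/8 - L) := Real.exp_le_exp.2 key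
      _ = Real.exp ((1:ℝ)/8) * Real.exp (-L) := by rw [← Real.exp_add]; ring_nf
      _ = Real.exp ((1:ℝ)/8) * (δ/(3*(m:ℝ)^2)) := by
          rw [hL, neg_add, Real.exp_add, Real.exp_neg, Real.exp_neg,
            Real.exp_log h3mpos, Real.exp_log (by positivity : (0:ℝ) < 1/δ)]
          rw [show ((1:ℝ)/δ)⁻¹ = δ from by field_simp]
          ring
  have he := exp_eighth
  calc (m:ℝ)^2 * (2 * Real.exp (-(↑n * (ε/2)^2)/2))
      ≤ (m:ℝ)^2 * (2 * (Real.exp ((1:ℝ)/8) * (δ/(3*(m:ℝ)^2)))) := by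
        have hx : (0:ℝ) ≤ (m:ℝ)^2 := by positivity
        nlinarith [hexp]
    _ = 2/3 * Real.exp ((1:ℝ)/8) * δ := by field_simp
    _ ≤ 2/3 * (3/2) * δ := by nlinarith
    _ = δ := by ring


/-- Every finite class of distributions over `ℕ` is 3-agnostic PAC learnable
in total variation distance with sample complexity
`m_Q(4ε, δ) ≤ (log (3 m²) + log (1/δ)) / (2 ε²)`. -/
theorem finite_class_agnostic_learnable (Q : Finset (PMF ℕ)) (hQ : Q.Nonempty) :
    ∃ (A : ∀ m : ℕ, (Fin m → ℕ) → PMF ℕ) (mQ : ℝ → ℝ → ℕ),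
      Agnostic3PAC ↑Q A mQ ∧
      ∀ ε δ : ℝ, 0 < ε → 0 < δ → δ < 1 →
        (mQ (4 * ε) δ : ℝ) ≤
          (Real.log (3 * (Q.card : ℝ) ^ 2) + Real.log (1 / δ)) / (2 * ε ^ 2) := by
  have hcard1 : 1 ≤ Q.card := Finset.Nonempty.card_pos hQ
  have hcard1R : (1:ℝ) ≤ (Q.card:ℝ) := by exact_mod_cast hcard1
  refine ⟨fun n S => qhat Q hQ n S,
    fun ε δ => ⌊8 * (Real.log (3*(Q.card:ℝ)^2) + Real.log (1/δ)) / ε^2⌋₊, ?_, ?_⟩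
  · intro ε δ hε hδ0 hδ1 P n hn
    haveI : IsProbabilityMeasure (iidSample P n) := by
      rw [iidSample]; infer_instance
    obtain ⟨qs, hqs, hqsmin⟩ := Q.exists_min_image (fun q => tv q P) hQ
    haveI : Nonempty ↥(Q : Set (PMF ℕ)) := ⟨⟨qs, hqs⟩⟩
    have hinfnn : 0 ≤ ⨅ q : ↥(Q : Set (PMF ℕ)), tv q.1 P :=
      Real.iInf_nonneg fun q => tv_nonneg _ _
    by_cases hε1 : 1 ≤ ε
    · have h1 : ∀ S : Fin n → ℕ,
          tv (qhat Q hQ n S) P ≤ 3*(⨅ q : ↥(Q : Set (PMF ℕ)), tv q.1 P) + ε := fun S => by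
        have h2 : tv (qhat Q hQ n S) P ≤ 1 := tv_le_one _ _
        linarith
      calc ENNReal.ofReal (1-δ) ≤ 1 := ENNReal.ofReal_le_one.2 (by linarith)
        _ = iidSample P n Set.univ := measure_univ.symm
        _ ≤ _ := measure_mono fun S _ => h1 S
    · push_neg at hε1
      have hinf : tv qs P ≤ ⨅ q : ↥(Q : Set (PMF ℕ)), tv q.1 P :=
        le_ciInf fun q => hqsmin q.1 q.2
      set L := Real.log (3*(Q.card:ℝ)^2) + Real.log (1/δ) with hLdef
      -- n ≥ 1
      have hL1 : (1:ℝ) ≤ L := by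
        have hlog3 : (1:ℝ) < Real.log 3 := by
          have h9 := Real.exp_one_lt_d9
          have h3 : Real.exp 1 < 3 := by norm_num at h9 ⊢; linarith
          calc (1:ℝ) = Real.log (Real.exp 1) := (Real.log_exp 1).symm
            _ < Real.log 3 := Real.log_lt_log (Real.exp_pos 1) h3
        have h1 : Real.log 3 ≤ Real.log (3*(Q.card:ℝ)^2) :=
          Real.log_le_log (by norm_num) (by nlinarith)
        have h2 : 0 ≤ Real.log (1/δ) := Real.log_nonneg (by rw [le_div_iff₀ hδ0]; linarith)
        simp only [hLdef]; linarith
      have hn0 : 0 < n := by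
        have h1 : (1:ℕ) ≤ ⌊8 * L / ε^2⌋₊ := by
          apply Nat.le_floor
          have hε2 : (0:ℝ) < ε^2 := by positivity
          have hε2' : ε^2 ≤ 1 := by nlinarith
          rw [le_div_iff₀ hε2]
          push_cast
          nlinarith
        exact lt_of_lt_of_le h1 hn
      -- good event
      set Good : Set (Fin n → ℕ) := ⋂ rr ∈ ((Q ×ˢ Q : Finset (PMF ℕ × PMF ℕ)) :
          Set (PMF ℕ × PMF ℕ)),
        {S | |emp n S (Sch rr.1 rr.2) - (P.toMeasure (Sch rr.1 rr.2)).toReal| ≤ ε/2}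
        with hGdef
      have hGm : MeasurableSet Good := by
        refine MeasurableSet.biInter (Finset.countable_toSet _) fun rr _ => ?_
        have hempm : Measurable fun S : Fin n → ℕ => emp n S (Sch rr.1 rr.2) := by
          apply Measurable.div_const
          refine Finset.measurable_sum _ fun i _ => ?_
          have h1 : Measurable fun x : ℕ => (Sch rr.1 rr.2).indicator (fun _ => (1:ℝ)) x :=
            measurable_from_top
          exact h1.comp (measurable_pi_apply i)
        exact measurableSet_le ((hempm.sub measurable_const).abs) measurable_const
      have hbad : iidSample P n Goodᶜ ≤ ENNReal.ofReal δ := by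
        have hcompl : Goodᶜ = ⋃ rr ∈ ((Q ×ˢ Q : Finset (PMF ℕ × PMF ℕ)) :
            Set (PMF ℕ × PMF ℕ)),
            {S | |emp n S (Sch rr.1 rr.2) - (P.toMeasure (Sch rr.1 rr.2)).toReal| ≤ ε/2}ᶜ := by
          rw [hGdef, Set.compl_iInter₂]
        rw [hcompl]
        calc iidSample P n _
            ≤ ∑ rr ∈ Q ×ˢ Q, iidSample P n
              {S | |emp n S (Sch rr.1 rr.2) - (P.toMeasure (Sch rr.1 rr.2)).toReal| ≤ ε/2}ᶜ :=
              measure_biUnion_finset_le _ _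
          _ ≤ ∑ _rr ∈ Q ×ˢ Q, ENNReal.ofReal (2 * Real.exp (-(↑n * (ε/2)^2)/2)) := by
              refine Finset.sum_le_sum fun rr _ => ?_
              have hset : {S : Fin n → ℕ |
                  |emp n S (Sch rr.1 rr.2) - (P.toMeasure (Sch rr.1 rr.2)).toReal| ≤ ε/2}ᶜ =
                  {S | ε/2 < |emp n S (Sch rr.1 rr.2) - (P.toMeasure (Sch rr.1 rr.2)).toReal|} := by
                ext S; simp [not_le]
              rw [hset]
              exact pair_bad P n hn0 _ (ε/2) (by positivity)
          _ = (Q ×ˢ Q).card • ENNReal.ofReal (2 * Real.exp (-(↑n * (ε/2)^2)/2)) :=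
              Finset.sum_const _
          _ ≤ ENNReal.ofReal δ := by
              rw [Finset.card_product, nsmul_eq_mul]
              have hc : ((Q.card * Q.card : ℕ) : ℝ≥0∞) =
                  ENNReal.ofReal ((Q.card : ℝ)^2) := by
                rw [← ENNReal.ofReal_natCast]
                congr 1
                push_cast; ring
              rw [hc, ← ENNReal.ofReal_mul (by positivity)]
              exact ENNReal.ofReal_le_ofReal
                (numeric Q.card hcard1 hε hε1 hδ0 hδ1 n hn)
      have hGood : ENNReal.ofReal (1-δ) ≤ iidSample P n Good := by
        have hcompl2 : iidSample P n Good = 1 - iidSample P n Goodᶜ := by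
          rw [measure_compl hGm (measure_ne_top _ _), measure_univ,
            ENNReal.sub_sub_cancel ENNReal.one_ne_top prob_le_one]
        rw [hcompl2]
        have h1 : ENNReal.ofReal (1-δ) = 1 - ENNReal.ofReal δ := by
          rw [← ENNReal.ofReal_one, ← ENNReal.ofReal_sub _ hδ0.le]
        rw [h1]
        exact tsub_le_tsub_left hbad 1
      refine le_trans hGood (measure_mono fun S hS => ?_)
      have hgood' : ∀ r ∈ Q, ∀ r' ∈ Q,
          |emp n S (Sch r r') - (P.toMeasure (Sch r r')).toReal| ≤ ε/2 := by
        intro r hr r' hr'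
        have hmem : ((r, r') : PMF ℕ × PMF ℕ) ∈ ((Q ×ˢ Q : Finset (PMF ℕ × PMF ℕ)) :
            Set (PMF ℕ × PMF ℕ)) := by
          simp only [Finset.coe_product, Set.mem_prod]
          exact ⟨hr, hr'⟩
        exact Set.mem_iInter₂.1 hS (r, r') hmem
      have hdet := det_bound Q hQ n S P qs hqs ε hgood'
      simp only [Set.mem_setOf_eq]
      linarith
  · intro ε δ hε hδ0 hδ1
    have hL0 : 0 ≤ Real.log (3*(Q.card:ℝ)^2) + Real.log (1/δ) := by
      have h1 : 0 ≤ Real.log (3*(Q.card:ℝ)^2) := Real.log_nonneg (by nlinarith)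
      have h2 : 0 ≤ Real.log (1/δ) := Real.log_nonneg (by rw [le_div_iff₀ hδ0]; linarith)
      linarith
    have harg : 8 * (Real.log (3*(Q.card:ℝ)^2) + Real.log (1/δ)) / (4*ε)^2 =
        (Real.log (3*(Q.card:ℝ)^2) + Real.log (1/δ)) / (2*ε^2) := by
      field_simp
      ring
    show ((⌊8 * (Real.log (3*(Q.card:ℝ)^2) + Real.log (1/δ)) / (4*ε)^2⌋₊ : ℕ) : ℝ) ≤ _
    calc ((⌊8 * (Real.log (3*(Q.card:ℝ)^2) + Real.log (1/δ)) / (4*ε)^2⌋₊ : ℕ) : ℝ)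
        ≤ 8 * (Real.log (3*(Q.card:ℝ)^2) + Real.log (1/δ)) / (4*ε)^2 :=
          Nat.floor_le (by positivity)
      _ = _ := harg
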